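/- Let L be the Laplacian matrix of a nonnegative weighted directed graph on L nodes, partitioned into N×N blocks L_{ij} according to a clustering C = {C_1,...,C_N} of the node set, where each block L_{ij} has constant row sums β_{ij} (i.e., L_{ij}·1 = β_{ij}·1). Then L is similar (via an explicit invertible transformation followed by a permutation) to a block upper-triangular matrix whose top-left N×N block is the quotient Laplacian L_G = [β_{ij}] and whose bottom-right (L−N)×(L−N) block is the matrix L̂ formed by the blocks L̂_{ij} = L̃_{ij} − 1·γ_{ij}^T, where L̃_{ij} deletes the first row and column indices of each cluster and γ_{ij} is the first row of L_{ij} with its first entry removed. Consequently, the spectrum of L (with multiplicity) is the union of the spectra of L_G and L̂. -/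

import Mathlib

open Matrix


open Matrix

section Stmt0Aux

lemma my_charpoly_conj {n R : Type*} [Fintype n] [DecidableEq n] [CommRing R]
    (T S A : Matrix n n R) (h : T * S = 1) : (T * A * S).charpoly = A.charpoly := by
  let f : Matrix n n R →+* Matrix n n (Polynomial R) :=
    (Polynomial.C : R →+* Polynomial R).mapMatrix
  have hmap : f T * f S = 1 := by rw [← _root_.map_mul, h, _root_.map_one]
  have hc : Commute (scalar n Polynomial.X) (f S) :=
    scalar_commute _ (fun r => Commute.all _ _) _
  have key : charmatrix (T * A * S) = f T * charmatrix A * f S := by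
    rw [charmatrix, charmatrix, Matrix.mul_sub, Matrix.sub_mul]
    congr 1
    · symm; rw [mul_assoc, hc.eq, ← mul_assoc, hmap, one_mul]
    · rw [← _root_.map_mul, ← _root_.map_mul]
  have hdet : (f T).det * (f S).det = 1 := by rw [← det_mul, hmap, det_one]
  rw [Matrix.charpoly, key, det_mul, det_mul, Matrix.charpoly]
  calc (f T).det * (charmatrix A).det * (f S).det
      = (f T).det * (f S).det * (charmatrix A).det := by ring
    _ = (charmatrix A).det := by rw [hdet, one_mul]

namespace Stmt0Aux

variable {N : ℕ} {l : Fin N → ℕ}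

/-- The similarity transformation: column `⟨j,0⟩` is the indicator of cluster `j`,
the other columns are standard basis vectors. -/
def S (N : ℕ) (l : Fin N → ℕ) :
    Matrix ((i : Fin N) × Fin (l i + 1)) ((i : Fin N) × Fin (l i + 1)) ℝ :=
  fun v u => if u.2 = 0 then (if v.1 = u.1 then 1 else 0) else (if v = u then 1 else 0)

/-- The inverse of `S`. -/
def T (N : ℕ) (l : Fin N → ℕ) :
    Matrix ((i : Fin N) × Fin (l i + 1)) ((i : Fin N) × Fin (l i + 1)) ℝ :=
  fun v u => (if v = u then 1 else 0) + (if v.2 ≠ 0 ∧ u = ⟨v.1, 0⟩ then -1 else 0)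

lemma mulS (A : Matrix ((i : Fin N) × Fin (l i + 1)) ((i : Fin N) × Fin (l i + 1)) ℝ)
    (v : (i : Fin N) × Fin (l i + 1)) (j : Fin N) (c : Fin (l j + 1)) :
    (A * S N l) v ⟨j, c⟩ = if c = 0 then ∑ b, A v ⟨j, b⟩ else A v ⟨j, c⟩ := by
  rw [Matrix.mul_apply]
  by_cases hc : c = 0
  · subst hc
    simp only [S, if_pos rfl, if_true]
    rw [← Finset.univ_sigma_univ, Finset.sum_sigma]
    simp [mul_ite, mul_one, mul_zero, Finset.sum_ite_eq' Finset.univ j]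
  · rw [if_neg hc]
    have : ∀ k : (i : Fin N) × Fin (l i + 1), S N l k ⟨j, c⟩ = if k = ⟨j, c⟩ then 1 else 0 := by
      intro k; simp [S, hc]
    simp only [this, mul_ite, mul_one, mul_zero]
    exact Finset.sum_ite_eq' _ _ _ |>.trans (by simp)

lemma Tmul (A : Matrix ((i : Fin N) × Fin (l i + 1)) ((i : Fin N) × Fin (l i + 1)) ℝ)
    (v u : (i : Fin N) × Fin (l i + 1)) :
    (T N l * A) v u = A v u + (if v.2 = 0 then 0 else -(A ⟨v.1, 0⟩ u)) := by
  rw [Matrix.mul_apply]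
  simp only [T, add_mul, ite_mul, one_mul, zero_mul, neg_mul, Finset.sum_add_distrib]
  rw [Finset.sum_ite_eq _ v (fun k => A k u)]
  simp only [Finset.mem_univ, if_true]
  congr 1
  by_cases hv : v.2 = 0
  · simp [hv]
  · simp only [hv, ne_eq, not_false_iff, true_and, if_neg]
    rw [Finset.sum_ite_eq' Finset.univ (⟨v.1, 0⟩ : (i : Fin N) × Fin (l i + 1))]
    simp

lemma TS : T N l * S N l = 1 := by
  ext ⟨i, a⟩ ⟨j, c⟩
  rw [Tmul]
  by_cases hij : i = j
  · subst hij
    by_cases hc : c = 0 <;> by_cases ha : a = 0 <;>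
      simp [S, Matrix.one_apply, Sigma.mk.inj_iff, hc, ha] <;>
      exact fun h => hc h.symm
  · by_cases hc : c = 0 <;> by_cases ha : a = 0 <;>
      simp [S, Matrix.one_apply, Sigma.mk.inj_iff, hc, ha, hij]

/-- Reindexing equivalence putting all first cluster nodes up front. -/
def e (N : ℕ) (l : Fin N → ℕ) :
    ((i : Fin N) × Fin (l i + 1)) ≃ (Fin N ⊕ (i : Fin N) × Fin (l i)) where
  toFun v := Fin.cases (Sum.inl v.1) (fun b => Sum.inr ⟨v.1, b⟩) v.2
  invFun := Sum.elim (fun i => ⟨i, 0⟩) (fun p => ⟨p.1, p.2.succ⟩)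
  left_inv := by rintro ⟨i, a⟩; induction a using Fin.cases <;> simp
  right_inv := by rintro (i | ⟨i, b⟩) <;> simp

end Stmt0Aux

end Stmt0Aux

/-- Block decomposition of a cluster-partitioned Laplacian with constant
block row sums: `ℒ` is similar to a block upper-triangular matrix with diagonal blocks
the quotient Laplacian `LG` and the reduced matrix `Lhat`; consequently the
characteristic polynomial (hence the spectrum with multiplicity) factors accordingly.
Nodes are indexed by `⟨i, a⟩` where `i` is the cluster and `a` the position in cluster
`i` (cluster `i` has `l i + 1` nodes, node `⟨i, 0⟩` being the first node of cluster `i`). -/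
theorem stmt0 (N : ℕ) (l : Fin N → ℕ)
    (ℒ : Matrix ((i : Fin N) × Fin (l i + 1)) ((i : Fin N) × Fin (l i + 1)) ℝ)
    (β : Fin N → Fin N → ℝ)
    -- Laplacian of a nonnegative digraph: nonpositive off-diagonal entries, zero row sums
    (hoff : ∀ v k, v ≠ k → ℒ v k ≤ 0)
    (hrow : ∀ v, ∑ k, ℒ v k = 0)
    -- inter-cluster common influence: constant block row sums
    (hblock : ∀ (i : Fin N) (a : Fin (l i + 1)) (j : Fin N),
      ∑ b : Fin (l j + 1), ℒ ⟨i, a⟩ ⟨j, b⟩ = β i j)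
    -- the quotient Laplacian
    (LG : Matrix (Fin N) (Fin N) ℝ) (hLG : ∀ i j, LG i j = β i j)
    -- the reduced matrix  L̂_{ij} = L̃_{ij} − 1·γ_{ij}^T
    (Lhat : Matrix ((i : Fin N) × Fin (l i)) ((i : Fin N) × Fin (l i)) ℝ)
    (hLhat : ∀ (i : Fin N) (a : Fin (l i)) (j : Fin N) (b : Fin (l j)),
      Lhat ⟨i, a⟩ ⟨j, b⟩ = ℒ ⟨i, a.succ⟩ ⟨j, b.succ⟩ - ℒ ⟨i, 0⟩ ⟨j, b.succ⟩) :
    (∃ S : Matrix ((i : Fin N) × Fin (l i + 1)) ((i : Fin N) × Fin (l i + 1)) ℝ,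
        IsUnit S.det ∧
        -- block with first nodes as both row and column indices equals the quotient Laplacian
        (∀ i j : Fin N, (S⁻¹ * ℒ * S) ⟨i, 0⟩ ⟨j, 0⟩ = LG i j) ∧
        -- blocks below: zero (block upper-triangular after permutation)
        (∀ (i : Fin N) (a : Fin (l i)) (j : Fin N),
            (S⁻¹ * ℒ * S) ⟨i, a.succ⟩ ⟨j, 0⟩ = 0) ∧
        -- bottom-right block equals L̂
        (∀ (i : Fin N) (a : Fin (l i)) (j : Fin N) (b : Fin (l j)),
            (S⁻¹ * ℒ * S) ⟨i, a.succ⟩ ⟨j, b.succ⟩ = Lhat ⟨i, a⟩ ⟨j, b⟩)) ∧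
    ℒ.charpoly = LG.charpoly * Lhat.charpoly := by
  classical
  have hTS : Stmt0Aux.T N l * Stmt0Aux.S N l = 1 := Stmt0Aux.TS
  have hinv : (Stmt0Aux.S N l)⁻¹ = Stmt0Aux.T N l := Matrix.inv_eq_left_inv hTS
  have hunit : IsUnit (Stmt0Aux.S N l).det := Matrix.isUnit_det_of_left_inverse hTS
  set M := Stmt0Aux.T N l * ℒ * Stmt0Aux.S N l with hM
  have hM1 : ∀ i j : Fin N, M ⟨i, 0⟩ ⟨j, 0⟩ = LG i j := by
    intro i j
    rw [hM, Stmt0Aux.mulS, if_pos rfl]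
    have h1 : ∀ b : Fin (l j + 1),
        (Stmt0Aux.T N l * ℒ) ⟨i, 0⟩ ⟨j, b⟩ = ℒ ⟨i, 0⟩ ⟨j, b⟩ := by
      intro b; rw [Stmt0Aux.Tmul]; simp
    rw [Finset.sum_congr rfl (fun b _ => h1 b), hblock, hLG]
  have hM2 : ∀ (i : Fin N) (a : Fin (l i)) (j : Fin N), M ⟨i, a.succ⟩ ⟨j, 0⟩ = 0 := by
    intro i a j
    rw [hM, Stmt0Aux.mulS, if_pos rfl]
    have h1 : ∀ b : Fin (l j + 1),
        (Stmt0Aux.T N l * ℒ) ⟨i, a.succ⟩ ⟨j, b⟩ = ℒ ⟨i, a.succ⟩ ⟨j, b⟩ - ℒ ⟨i, 0⟩ ⟨j, b⟩ := by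
      intro b; rw [Stmt0Aux.Tmul]
      simp [Fin.succ_ne_zero, sub_eq_add_neg]
    rw [Finset.sum_congr rfl (fun b _ => h1 b), Finset.sum_sub_distrib, hblock, hblock, sub_self]
  have hM3 : ∀ (i : Fin N) (a : Fin (l i)) (j : Fin N) (b : Fin (l j)),
      M ⟨i, a.succ⟩ ⟨j, b.succ⟩ = Lhat ⟨i, a⟩ ⟨j, b⟩ := by
    intro i a j b
    rw [hM, Stmt0Aux.mulS, if_neg (Fin.succ_ne_zero b), Stmt0Aux.Tmul, hLhat]
    simp [Fin.succ_ne_zero, sub_eq_add_neg]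
  refine ⟨⟨Stmt0Aux.S N l, hunit, by rw [hinv]; exact hM1, by rw [hinv]; exact hM2,
      by rw [hinv]; exact hM3⟩, ?_⟩
  have hcp : ℒ.charpoly = M.charpoly := (my_charpoly_conj _ _ _ hTS).symm
  set B : Matrix (Fin N) ((i : Fin N) × Fin (l i)) ℝ :=
    fun i p => M ⟨i, 0⟩ ⟨p.1, p.2.succ⟩ with hB
  have hre : Matrix.reindex (Stmt0Aux.e N l) (Stmt0Aux.e N l) M
      = Matrix.fromBlocks LG B 0 Lhat := by
    ext x y
    rcases x with i | ⟨i, a⟩ <;> rcases y with j | ⟨j, b⟩ <;>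
      simp only [Matrix.reindex_apply, Matrix.submatrix_apply, Stmt0Aux.e,
        Equiv.coe_fn_symm_mk, Sum.elim_inl, Sum.elim_inr, Matrix.fromBlocks_apply₁₁,
        Matrix.fromBlocks_apply₁₂, Matrix.fromBlocks_apply₂₁, Matrix.fromBlocks_apply₂₂,
        Matrix.zero_apply]
    · exact hM1 i j
    · rfl
    · exact hM2 i a j
    · exact hM3 i a j b
  rw [hcp, ← Matrix.charpoly_reindex (Stmt0Aux.e N l) M, hre,
    Matrix.charpoly_fromBlocks_zero₂₁]
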